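/- Let d be an odd prime, c > 0 a real number, and ρ a bipartite density supported in M such that for every k ≠ 0 and all n1, n2 ∈ Z_d, ρ_{n1 n2, (n1+k)(n2+k)} = c·δ(n1,n2). Then ρ = ρ_D − c I_d ⊗ I_d + c Σ_{a∈Z_d} Σ_{m∈Z_d} P_{a,1}(m) ⊗ P_{−a,1}(−m), and if every diagonal entry of ρ is at least c then ρ is separable. -/

import Mathlib

set_option linter.unusedSectionVars false
set_option linter.unusedVariables false


open Matrix Kronecker
open scoped ComplexOrder

/-- `η = exp(2πi/d)`. -/
noncomputable def eta (d : ℕ) : ℂ := Complex.exp (2 * Real.pi * Complex.I / d)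

/-- The generalized spin matrix `S_{j,k} = Σ_m η^{jm} |m⟩⟨m+k|`. -/
noncomputable def spinS (d : ℕ) (j k : ZMod d) : Matrix (ZMod d) (ZMod d) ℂ :=
  Matrix.of fun m n => if n = m + k then eta d ^ (j.val * m.val) else 0

/-- `P_{j,k}(r) = (1/d) Σ_{m=0}^{d−1} η^{mr} (S_{j,k})^m`. -/
noncomputable def spinP (d : ℕ) [NeZero d] (j k r : ZMod d) : Matrix (ZMod d) (ZMod d) ℂ :=
  (d : ℂ)⁻¹ • ∑ m : Fin d, eta d ^ (m.val * r.val) • spinS d j k ^ (m : ℕ)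

/-- A bipartite density on `C^d ⊗ C^d` is separable if it is a finite convex
combination of Kronecker products of `d×d` densities. -/
def IsSeparableState {d : ℕ} [NeZero d]
    (ρ : Matrix (ZMod d × ZMod d) (ZMod d × ZMod d) ℂ) : Prop :=
  ∃ (n : ℕ) (w : Fin n → ℝ) (σ τ : Fin n → Matrix (ZMod d) (ZMod d) ℂ),
    (∀ i, 0 ≤ w i) ∧ (∑ i, w i = 1) ∧
    (∀ i, (σ i).PosSemidef ∧ (σ i).trace = 1) ∧
    (∀ i, (τ i).PosSemidef ∧ (τ i).trace = 1) ∧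
    ρ = ∑ i, (w i : ℂ) • (σ i ⊗ₖ τ i)

section aux
variable (d : ℕ) [NeZero d]

lemma eta_prim : IsPrimitiveRoot (eta d) d := by
  simpa [eta, mul_comm] using Complex.isPrimitiveRoot_exp d (NeZero.ne d)

noncomputable def chi (x : ZMod d) : ℂ := eta d ^ x.val

lemma eta_pow_d : eta d ^ d = 1 := (eta_prim d).pow_eq_one

lemma eta_pow_natCast (n : ℕ) : eta d ^ n = chi d (n : ZMod d) := by
  unfold chi
  conv_lhs => rw [← Nat.div_add_mod n d]
  rw [pow_add, pow_mul, eta_pow_d, one_pow, one_mul, ZMod.val_natCast]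

lemma chi_add (x y : ZMod d) : chi d (x + y) = chi d x * chi d y := by
  have h1 : ((x.val + y.val : ℕ) : ZMod d) = x + y := by
    push_cast [ZMod.natCast_rightInverse x, ZMod.natCast_rightInverse y]; ring
  rw [← h1, ← eta_pow_natCast, pow_add]; rfl

lemma chi_zero : chi d 0 = 1 := by simp [chi]

lemma chi_natval_mul (x y : ZMod d) : eta d ^ (x.val * y.val) = chi d (x * y) := by
  rw [eta_pow_natCast]
  congr 1
  push_cast [ZMod.natCast_rightInverse x, ZMod.natCast_rightInverse y]
  ring

lemma chi_neg (x : ZMod d) : chi d (-x) = (chi d x)⁻¹ := by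
  refine eq_inv_of_mul_eq_one_left ?_
  rw [← chi_add, neg_add_cancel, chi_zero]

lemma conj_eta : (starRingEnd ℂ) (eta d) = (eta d)⁻¹ := by
  rw [eta, ← Complex.exp_conj, ← Complex.exp_neg]
  congr 1
  simp [map_ofNat]
  ring

lemma conj_chi (x : ZMod d) : (starRingEnd ℂ) (chi d x) = chi d (-x) := by
  rw [chi_neg, chi, map_pow, conj_eta, inv_pow]

lemma zmod_sum (f : ZMod d → ℂ) : ∑ m : ZMod d, f m = ∑ i ∈ Finset.range d, f (i : ZMod d) := by
  refine Finset.sum_nbij' (fun m => m.val) (fun i => (i : ZMod d)) ?_ ?_ ?_ ?_ ?_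
  · intro a _; exact Finset.mem_range.mpr (ZMod.val_lt a)
  · intro a _; exact Finset.mem_univ _
  · intro a _; exact ZMod.natCast_rightInverse a
  · intro a ha; exact ZMod.val_natCast_of_lt (Finset.mem_range.mp ha)
  · intro a _; rw [ZMod.natCast_rightInverse a]

lemma sum_chi_all (hd : 1 < d) : ∑ m : ZMod d, chi d m = 0 := by
  rw [zmod_sum]
  have hη : eta d ≠ 1 := by
    have := (eta_prim d).pow_ne_one_of_pos_of_lt (by norm_num) hd
    simpa using this
  have : ∑ i ∈ Finset.range d, chi d (i : ZMod d) = ∑ i ∈ Finset.range d, eta d ^ i := by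
    refine Finset.sum_congr rfl fun i _ => ?_
    rw [eta_pow_natCast]
  rw [this, geom_sum_eq hη, eta_pow_d, sub_self, zero_div]

lemma sum_chi_mul (hd : d.Prime) (x : ZMod d) :
    ∑ m : ZMod d, chi d (m * x) = if x = 0 then (d : ℂ) else 0 := by
  haveI := Fact.mk hd
  by_cases hx : x = 0
  · simp [hx, chi_zero, Finset.card_univ]
  · rw [if_neg hx]
    have := Fintype.sum_equiv (Equiv.mulRight₀ x hx) (fun m => chi d (m * x)) (chi d)
      (fun m => rfl)
    rw [this, sum_chi_all d hd.one_lt]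
end aux

section spin
variable (d : ℕ) [NeZero d]

/-- nat-indexed partial sum `∑_{i<n} (p+i)` in `ZMod d`. -/
def shat (n : ℕ) (p : ZMod d) : ZMod d := ∑ i ∈ Finset.range n, (p + (i : ℕ))

lemma shat_succ (n : ℕ) (p : ZMod d) :
    shat d (n + 1) p = shat d n p + (p + (n : ℕ)) := by
  rw [shat, Finset.sum_range_succ]; rfl

lemma shat_add (a b : ℕ) (p : ZMod d) :
    shat d (a + b) p = shat d a p + shat d b (p + (a : ℕ)) := by
  induction b with
  | zero => simp [shat]
  | succ b ih =>
      rw [← add_assoc, shat_succ, ih, shat_succ]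
      push_cast
      ring

lemma sum_range_d_zero (hodd : Odd d) : ((∑ i ∈ Finset.range d, i : ℕ) : ZMod d) = 0 := by
  obtain ⟨k, hk⟩ := hodd
  have h2 : (∑ i ∈ Finset.range d, i) * 2 = d * (d - 1) := Finset.sum_range_id_mul_two d
  have hd1 : d - 1 = 2 * k := by omega
  have : (∑ i ∈ Finset.range d, i) * 2 = (d * k) * 2 := by rw [h2, hd1]; ring
  have hsum : (∑ i ∈ Finset.range d, i) = d * k := by omega
  rw [hsum]
  push_cast
  simp

lemma shat_d (hodd : Odd d) (p : ZMod d) : shat d d p = 0 := by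
  unfold shat
  rw [Finset.sum_add_distrib, Finset.sum_const, Finset.card_range, ← Nat.cast_sum,
    sum_range_d_zero d hodd, add_zero, nsmul_eq_mul]
  simp

lemma shat_period (hodd : Odd d) (n : ℕ) (p : ZMod d) : shat d (n + d) p = shat d n p := by
  rw [shat_add, shat_d _ hodd, add_zero]

lemma shat_mod (hodd : Odd d) (n : ℕ) (p : ZMod d) : shat d n p = shat d (n % d) p := by
  induction n using Nat.strong_induction_on with
  | _ n ih =>
    by_cases h : n < d
    · rw [Nat.mod_eq_of_lt h]
    · push_neg at h
      have h1 : n = (n - d) + d := by omega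
      rw [h1, shat_period _ hodd, ih (n - d) (by have := NeZero.pos d; omega),
        Nat.add_mod_right]

/-- `s(t,p) = ∑_{i < t.val} (p+i)` -/
def sfun (t p : ZMod d) : ZMod d := shat d t.val p

lemma sfun_zero (p : ZMod d) : sfun d 0 p = 0 := by
  simp [sfun, shat, ZMod.val_zero]

lemma sfun_cocycle (hodd : Odd d) (t t' p : ZMod d) :
    sfun d t p + sfun d t' (p + t) = sfun d (t + t') p := by
  have h1 : sfun d (t + t') p = shat d (t.val + t'.val) p := by
    unfold sfun
    rw [shat_mod d hodd (t.val + t'.val), ZMod.val_add]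
  rw [h1, shat_add]
  unfold sfun
  rw [ZMod.natCast_rightInverse t]

lemma spinS_pow (a : ZMod d) (t : ℕ) :
    spinS d a 1 ^ t =
      Matrix.of fun p q => if q = p + ((t : ℕ) : ZMod d) then chi d (a * shat d t p) else 0 := by
  induction t with
  | zero => ext p q; simp [Matrix.one_apply, shat, chi_zero, eq_comm]
  | succ t ih =>
      ext p q
      rw [pow_succ, ih, Matrix.mul_apply]
      simp only [Matrix.of_apply, spinS]
      rw [Finset.sum_eq_single (p + ((t : ℕ) : ZMod d)) ?_ ?_]
      rotate_left
      · intro b _ hb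
        rw [if_neg hb, zero_mul]
      · intro h; exact absurd (Finset.mem_univ _) h
      rw [if_pos rfl]
      have hcast : ((t + 1 : ℕ) : ZMod d) = ((t : ℕ) : ZMod d) + 1 := by push_cast; ring
      rw [hcast]
      by_cases h : q = p + (((t : ℕ) : ZMod d) + 1)
      · rw [if_pos (by rw [h, add_assoc]), if_pos h]
        rw [chi_natval_mul, ← chi_add, ← mul_add, shat_succ]
      · rw [if_neg (fun hc => h (by rw [hc, add_assoc])), if_neg h, mul_zero]

end spin

section spin2
variable (d : ℕ) [NeZero d]

lemma spinP_apply (a m p q : ZMod d) :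
    spinP d a 1 m p q = (d : ℂ)⁻¹ * chi d ((q - p) * m + a * sfun d (q - p) p) := by
  unfold spinP
  rw [Matrix.smul_apply, Matrix.sum_apply]
  simp only [Matrix.smul_apply, spinS_pow, Matrix.of_apply, smul_eq_mul]
  rw [Finset.sum_eq_single (⟨(q - p).val, ZMod.val_lt _⟩ : Fin d)]
  · rw [if_pos]
    · simp only []
      rw [chi_natval_mul, ← chi_add]
      rfl
    · simp only []
      rw [ZMod.natCast_rightInverse (q - p)]
      ring
  · intro b _ hb
    rw [if_neg, mul_zero]
    intro hc
    apply hb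
    have : ((b : ℕ) : ZMod d) = q - p := by rw [hc]; ring
    apply Fin.ext
    rw [← ZMod.val_natCast_of_lt b.isLt, this]
  · intro h; exact absurd (Finset.mem_univ _) h

lemma sfun_sub (t p1 p2 : ZMod d) : sfun d t p1 - sfun d t p2 = t * (p1 - p2) := by
  unfold sfun shat
  rw [← Finset.sum_sub_distrib]
  have : ∀ i ∈ Finset.range t.val, (p1 + (i : ℕ)) - (p2 + (i : ℕ)) = p1 - p2 := by
    intro i _; ring
  rw [Finset.sum_congr rfl this, Finset.sum_const, Finset.card_range, nsmul_eq_mul,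
    ZMod.natCast_rightInverse t]

lemma F_apply (hd : d.Prime) (hodd : Odd d) (p1 p2 q1 q2 : ZMod d) :
    (∑ a : ZMod d, ∑ m : ZMod d, spinP d a 1 m ⊗ₖ spinP d (-a) 1 (-m)) (p1, p2) (q1, q2)
      = if q1 - p1 = q2 - p2 ∧ (q1 - p1) * (p1 - p2) = 0 then 1 else 0 := by
  have hdc : (d : ℂ) ≠ 0 := Nat.cast_ne_zero.mpr (NeZero.ne d)
  set t1 := q1 - p1
  set t2 := q2 - p2
  set s1 := sfun d t1 p1
  set s2 := sfun d t2 p2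
  have step1 : (∑ a : ZMod d, ∑ m : ZMod d, spinP d a 1 m ⊗ₖ spinP d (-a) 1 (-m)) (p1, p2) (q1, q2)
      = ∑ a : ZMod d, ∑ m : ZMod d,
        ((d : ℂ)⁻¹ * chi d (a * (s1 - s2))) * ((d : ℂ)⁻¹ * chi d (m * (t1 - t2))) := by
    rw [Matrix.sum_apply]
    refine Finset.sum_congr rfl fun a _ => ?_
    rw [Matrix.sum_apply]
    refine Finset.sum_congr rfl fun m _ => ?_
    rw [Matrix.kroneckerMap_apply, spinP_apply, spinP_apply]
    have harg : chi d (t1 * m + a * s1) * chi d (t2 * (-m) + (-a) * s2)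
        = chi d (a * (s1 - s2)) * chi d (m * (t1 - t2)) := by
      rw [← chi_add, ← chi_add]
      congr 1
      ring
    calc ((d : ℂ)⁻¹ * chi d (t1 * m + a * s1)) * ((d : ℂ)⁻¹ * chi d (t2 * (-m) + (-a) * s2))
        = (d : ℂ)⁻¹ * (d : ℂ)⁻¹ * (chi d (t1 * m + a * s1) * chi d (t2 * (-m) + (-a) * s2)) := by ring
      _ = (d : ℂ)⁻¹ * (d : ℂ)⁻¹ * (chi d (a * (s1 - s2)) * chi d (m * (t1 - t2))) := by rw [harg]
      _ = ((d : ℂ)⁻¹ * chi d (a * (s1 - s2))) * ((d : ℂ)⁻¹ * chi d (m * (t1 - t2))) := by ring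
  rw [step1]
  have step2 : (∑ a : ZMod d, ∑ m : ZMod d,
        ((d : ℂ)⁻¹ * chi d (a * (s1 - s2))) * ((d : ℂ)⁻¹ * chi d (m * (t1 - t2))))
      = ((d : ℂ)⁻¹ * ∑ a : ZMod d, chi d (a * (s1 - s2)))
        * ((d : ℂ)⁻¹ * ∑ m : ZMod d, chi d (m * (t1 - t2))) := by
    rw [Finset.mul_sum, Finset.mul_sum, ← Finset.sum_mul_sum]
  rw [step2, sum_chi_mul d hd, sum_chi_mul d hd]
  by_cases h1 : s1 - s2 = 0 <;> by_cases h2 : t1 - t2 = 0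
  · rw [if_pos h1, if_pos h2, if_pos]
    · field_simp
    · constructor
      · exact sub_eq_zero.mp h2
      · have ht : t1 = t2 := sub_eq_zero.mp h2
        have := sfun_sub d t1 p1 p2
        rw [← this]
        show sfun d t1 p1 - sfun d t1 p2 = 0
        rw [show sfun d t1 p2 = s2 by rw [ht]]
        exact h1
  · rw [if_pos h1, if_neg h2, if_neg]
    · ring
    · rintro ⟨ha, -⟩; exact h2 (sub_eq_zero.mpr ha)
  · rw [if_neg h1, if_pos h2, if_neg]
    · ring
    · rintro ⟨ha, hb⟩
      apply h1
      have ht : t1 = t2 := ha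
      rw [show s2 = sfun d t1 p2 by rw [ht]]
      rw [sfun_sub d t1 p1 p2]
      exact hb
  · rw [if_neg h1, if_neg h2, if_neg]
    · ring
    · rintro ⟨ha, -⟩; exact h2 (sub_eq_zero.mpr ha)

end spin2

section density
variable (d : ℕ) [NeZero d]

lemma spinP_trace (a m : ZMod d) : (spinP d a 1 m).trace = 1 := by
  have hdc : (d : ℂ) ≠ 0 := Nat.cast_ne_zero.mpr (NeZero.ne d)
  unfold Matrix.trace
  have : ∀ p : ZMod d, (spinP d a 1 m).diag p = (d : ℂ)⁻¹ := by
    intro p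
    rw [Matrix.diag_apply, spinP_apply, sub_self, sfun_zero, zero_mul, mul_zero, add_zero,
      chi_zero, mul_one]
  rw [Finset.sum_congr rfl fun p _ => this p, Finset.sum_const, Finset.card_univ,
    ZMod.card, nsmul_eq_mul]
  field_simp

lemma spinP_eq_conjTranspose_mul_self (hodd : Odd d) (a m : ZMod d) :
    spinP d a 1 m = (spinP d a 1 m)ᴴ * spinP d a 1 m := by
  have hdc : (d : ℂ) ≠ 0 := Nat.cast_ne_zero.mpr (NeZero.ne d)
  ext p q
  rw [Matrix.mul_apply]
  have hterm : ∀ r : ZMod d, (spinP d a 1 m)ᴴ p r * spinP d a 1 m r q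
      = (d : ℂ)⁻¹ * ((d : ℂ)⁻¹ * chi d ((q - p) * m + a * sfun d (q - p) p)) := by
    intro r
    rw [Matrix.conjTranspose_apply, spinP_apply, spinP_apply]
    have h1 : (star ((d : ℂ)⁻¹ * chi d ((p - r) * m + a * sfun d (p - r) r)) : ℂ)
        = (d : ℂ)⁻¹ * chi d (-((p - r) * m + a * sfun d (p - r) r)) := by
      simp only [Complex.star_def, _root_.map_mul, map_inv₀, Complex.conj_natCast, conj_chi]
    rw [h1]
    have hco : sfun d (q - r) r - sfun d (p - r) r = sfun d (q - p) p := by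
      have h := sfun_cocycle d hodd (p - r) (q - p) r
      rw [show r + (p - r) = p by ring, show (p - r) + (q - p) = q - r by ring] at h
      linear_combination -h
    have harg : chi d (-((p - r) * m + a * sfun d (p - r) r))
          * chi d ((q - r) * m + a * sfun d (q - r) r)
        = chi d ((q - p) * m + a * sfun d (q - p) p) := by
      rw [← chi_add]
      congr 1
      linear_combination a * hco
    calc ((d : ℂ)⁻¹ * chi d (-((p - r) * m + a * sfun d (p - r) r)))
          * ((d : ℂ)⁻¹ * chi d ((q - r) * m + a * sfun d (q - r) r))
        = (d : ℂ)⁻¹ * ((d : ℂ)⁻¹ * (chi d (-((p - r) * m + a * sfun d (p - r) r))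
            * chi d ((q - r) * m + a * sfun d (q - r) r))) := by ring
      _ = (d : ℂ)⁻¹ * ((d : ℂ)⁻¹ * chi d ((q - p) * m + a * sfun d (q - p) p)) := by rw [harg]
  rw [Finset.sum_congr rfl fun r _ => hterm r, Finset.sum_const, Finset.card_univ,
    ZMod.card, nsmul_eq_mul, spinP_apply]
  field_simp

lemma spinP_posSemidef (hodd : Odd d) (a m : ZMod d) : (spinP d a 1 m).PosSemidef := by
  rw [spinP_eq_conjTranspose_mul_self d hodd a m]
  exact Matrix.posSemidef_conjTranspose_mul_self _

lemma stdBasis_diagonal (p : ZMod d) :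
    Matrix.single p p (1 : ℂ) = Matrix.diagonal (fun q => if q = p then 1 else 0) := by
  ext i j
  simp only [Matrix.single, Matrix.of_apply, Matrix.diagonal_apply]
  by_cases h1 : i = j
  · subst h1
    by_cases h2 : i = p <;> simp [h2, eq_comm] <;> simp [Ne.symm h2]
  · rw [if_neg h1, if_neg]
    rintro ⟨rfl, rfl⟩
    exact h1 rfl

lemma stdBasis_posSemidef (p : ZMod d) : (Matrix.single p p (1 : ℂ)).PosSemidef := by
  rw [stdBasis_diagonal]
  refine Matrix.posSemidef_diagonal_iff.mpr fun i => ?_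
  by_cases h : i = p <;> simp [h]

lemma stdBasis_trace (p : ZMod d) : (Matrix.single p p (1 : ℂ)).trace = 1 := by
  rw [stdBasis_diagonal, Matrix.trace_diagonal]
  rw [Finset.sum_ite_eq' Finset.univ p (fun _ => (1:ℂ))]
  simp

end density

/-- For `d` an odd prime, `c > 0`, and `ρ` a bipartite density
supported in `M` with `ρ_{n1 n2,(n1+k)(n2+k)} = c δ(n1,n2)` for `k ≠ 0`, one has
`ρ = ρ_D − c I_d ⊗ I_d + c Σ_{a,m} P_{a,1}(m) ⊗ P_{−a,1}(−m)`, and if every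
diagonal entry of `ρ` is at least `c` then `ρ` is separable. -/
theorem special_case_positive_c (d : ℕ) [NeZero d] (hd : d.Prime) (hodd : Odd d)
    (c : ℝ) (hc : 0 < c)
    (ρ : Matrix (ZMod d × ZMod d) (ZMod d × ZMod d) ℂ)
    (hρ : ρ.PosSemidef ∧ ρ.trace = 1)
    (hsupp : ∀ j1 j2 k1 k2 : ZMod d, j2 - j1 ≠ k2 - k1 → ρ (j1, j2) (k1, k2) = 0)
    (hval : ∀ k : ZMod d, k ≠ 0 → ∀ n1 n2 : ZMod d,
        ρ (n1, n2) (n1 + k, n2 + k) = (c : ℂ) * (if n1 = n2 then 1 else 0)) :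
    (ρ = Matrix.diagonal ρ.diag
        - (c : ℂ) • ((1 : Matrix (ZMod d) (ZMod d) ℂ) ⊗ₖ (1 : Matrix (ZMod d) (ZMod d) ℂ))
        + (c : ℂ) • ∑ a : ZMod d, ∑ m : ZMod d, spinP d a 1 m ⊗ₖ spinP d (-a) 1 (-m)) ∧
    ((∀ i : ZMod d × ZMod d, c ≤ (ρ i i).re) → IsSeparableState ρ) := by
  haveI := Fact.mk hd
  have hdc : (d : ℂ) ≠ 0 := Nat.cast_ne_zero.mpr (NeZero.ne d)
  -- Part 1
  have part1 : ρ = Matrix.diagonal ρ.diag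
        - (c : ℂ) • ((1 : Matrix (ZMod d) (ZMod d) ℂ) ⊗ₖ (1 : Matrix (ZMod d) (ZMod d) ℂ))
        + (c : ℂ) • ∑ a : ZMod d, ∑ m : ZMod d, spinP d a 1 m ⊗ₖ spinP d (-a) 1 (-m) := by
    ext ⟨p1, p2⟩ ⟨q1, q2⟩
    rw [Matrix.add_apply, Matrix.sub_apply, Matrix.smul_apply, Matrix.smul_apply,
      F_apply d hd hodd, Matrix.kroneckerMap_apply, Matrix.diagonal_apply]
    by_cases hsup : q1 - p1 = q2 - p2
    · by_cases ht : q1 - p1 = 0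
      · -- diagonal entry
        have h1 : q1 = p1 := by linear_combination ht
        have h2 : q2 = p2 := by rw [hsup] at ht; linear_combination ht
        subst h1; subst h2
        rw [if_pos rfl, if_pos ⟨hsup, by rw [ht]; ring⟩]
        simp [Matrix.one_apply, Matrix.diag]
      · -- off-diagonal, in M
        have hv := hval (q1 - p1) ht p1 p2
        have hq1 : p1 + (q1 - p1) = q1 := by ring
        have hq2 : p2 + (q1 - p1) = q2 := by rw [hsup]; ring
        rw [hq1, hq2] at hv
        rw [hv]
        have hne1 : p1 ≠ q1 := fun h => ht (by rw [← h]; ring)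
        have hne : ((p1, p2) : ZMod d × ZMod d) ≠ (q1, q2) := fun h => hne1 (congrArg Prod.fst h)
        rw [if_neg hne]
        rw [Matrix.one_apply_ne hne1, zero_mul, smul_eq_mul, smul_eq_mul, mul_zero]
        by_cases hpp : p1 = p2
        · rw [if_pos hpp, if_pos ⟨hsup, by rw [hpp, sub_self, mul_zero]⟩]
          ring
        · rw [if_neg hpp, if_neg]
          · ring
          · rintro ⟨-, hz⟩
            rcases mul_eq_zero.mp hz with h | h
            · exact ht h
            · exact hpp (by linear_combination h)
    · -- outside M : everything vanishes
      have hρ0 : ρ (p1, p2) (q1, q2) = 0 := by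
        refine hsupp p1 p2 q1 q2 (fun h => hsup ?_)
        linear_combination h
      rw [hρ0]
      have hne : ((p1, p2) : ZMod d × ZMod d) ≠ (q1, q2) := by
        rintro h
        rw [Prod.mk.injEq] at h
        exact hsup (by rw [h.1, h.2, sub_self, sub_self])
      rw [if_neg hne, if_neg (fun h => hsup h.1)]
      have h11 : (1 : Matrix (ZMod d) (ZMod d) ℂ) p1 q1 * (1 : Matrix (ZMod d) (ZMod d) ℂ) p2 q2 = 0 := by
        by_cases h1 : p1 = q1
        · by_cases h2 : p2 = q2
          · exact absurd (Prod.ext h1 h2) hne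
          · rw [Matrix.one_apply_ne h2, mul_zero]
        · rw [Matrix.one_apply_ne h1, zero_mul]
      rw [h11]
      simp
  refine ⟨part1, fun hdiag => ?_⟩
  -- Part 2 : separability
  classical
  set ι := ((ZMod d × ZMod d) ⊕ (ZMod d × ZMod d)) with hι
  set e : Fin (Fintype.card ι) ≃ ι := (Fintype.equivFin ι).symm with he
  have hreρ : ∀ i : ZMod d × ZMod d, ((ρ i i).re : ℂ) = ρ i i :=
    fun i => hρ.1.1.coe_re_apply_self i
  refine ⟨Fintype.card ι,
    fun i => Sum.elim (fun pq => (ρ pq pq).re - c) (fun _ => c) (e i),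
    fun i => Sum.elim (fun pq => Matrix.single pq.1 pq.1 1)
      (fun am => spinP d am.1 1 am.2) (e i),
    fun i => Sum.elim (fun pq => Matrix.single pq.2 pq.2 1)
      (fun am => spinP d (-am.1) 1 (-am.2)) (e i), ?_, ?_, ?_, ?_, ?_⟩
  · intro i
    rcases h : e i with pq | am <;> simp only [h, Sum.elim_inl, Sum.elim_inr]
    · exact sub_nonneg.mpr (hdiag pq)
    · exact le_of_lt hc
  · rw [Fintype.sum_equiv e _ (Sum.elim (fun pq => (ρ pq pq).re - c) (fun _ => c))
      (fun i => rfl), Fintype.sum_sum_type]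
    simp only [Sum.elim_inl, Sum.elim_inr, Finset.sum_sub_distrib, Finset.sum_const,
      Finset.card_univ, smul_eq_mul]
    have htr : ∑ i : ZMod d × ZMod d, (ρ i i).re = 1 := by
      have : (ρ.trace).re = 1 := by rw [hρ.2]; simp
      rw [← this, Matrix.trace]
      rw [Complex.re_sum]
      rfl
    rw [htr]
    ring
  · intro i
    rcases h : e i with pq | am <;> simp only [h, Sum.elim_inl, Sum.elim_inr]
    · exact ⟨stdBasis_posSemidef d _, stdBasis_trace d _⟩
    · exact ⟨spinP_posSemidef d hodd _ _, spinP_trace d _ _⟩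
  · intro i
    rcases h : e i with pq | am <;> simp only [h, Sum.elim_inl, Sum.elim_inr]
    · exact ⟨stdBasis_posSemidef d _, stdBasis_trace d _⟩
    · exact ⟨spinP_posSemidef d hodd _ _, spinP_trace d _ _⟩
  · rw [Fintype.sum_equiv e _ (Sum.elim
        (fun pq : ZMod d × ZMod d => (((ρ pq pq).re - c : ℝ) : ℂ) •
          (Matrix.single pq.1 pq.1 1 ⊗ₖ Matrix.single pq.2 pq.2 1))
        (fun am : ZMod d × ZMod d => ((c : ℝ) : ℂ) •
          (spinP d am.1 1 am.2 ⊗ₖ spinP d (-am.1) 1 (-am.2))))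
      (fun i => by rcases h : e i with pq | am <;> simp only [h, Sum.elim_inl, Sum.elim_inr]),
      Fintype.sum_sum_type]
    simp only [Sum.elim_inl, Sum.elim_inr]
    have hA : (∑ pq : ZMod d × ZMod d, (((ρ pq pq).re - c : ℝ) : ℂ) •
        (Matrix.single pq.1 pq.1 (1:ℂ) ⊗ₖ Matrix.single pq.2 pq.2 1))
        = Matrix.diagonal ρ.diag - (c : ℂ) •
          ((1 : Matrix (ZMod d) (ZMod d) ℂ) ⊗ₖ (1 : Matrix (ZMod d) (ZMod d) ℂ)) := by
      ext ⟨a, b⟩ ⟨a', b'⟩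
      rw [Matrix.sum_apply]
      have hterm : ∀ pq : ZMod d × ZMod d, ((((ρ pq pq).re - c : ℝ) : ℂ) •
          (Matrix.single pq.1 pq.1 (1:ℂ) ⊗ₖ Matrix.single pq.2 pq.2 1)) (a, b) (a', b')
          = if pq = (a, b) ∧ (a, b) = (a', b') then (((ρ pq pq).re - c : ℝ) : ℂ) else 0 := by
        rintro ⟨u, v⟩
        rw [Matrix.smul_apply, Matrix.kroneckerMap_apply]
        simp only [Matrix.single, Matrix.of_apply, smul_eq_mul]
        rw [ite_zero_mul_ite_zero, mul_ite, mul_zero]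
        refine if_congr ?_ (by ring) rfl
        constructor
        · rintro ⟨⟨rfl, h1⟩, ⟨rfl, h2⟩⟩
          exact ⟨rfl, Prod.ext h1 h2⟩
        · rintro ⟨h1, h2⟩
          rw [Prod.mk.injEq] at h1 h2
          exact ⟨⟨h1.1, h1.1.trans h2.1⟩, ⟨h1.2, h1.2.trans h2.2⟩⟩
      rw [Finset.sum_congr rfl fun pq _ => hterm pq]
      simp only [ite_and]
      rw [Finset.sum_ite_eq' Finset.univ ((a, b) : ZMod d × ZMod d), if_pos (Finset.mem_univ _)]
      rw [Matrix.sub_apply, Matrix.smul_apply, Matrix.kroneckerMap_apply, Matrix.diagonal_apply]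
      by_cases h : ((a, b) : ZMod d × ZMod d) = (a', b')
      · rw [if_pos h, if_pos h]
        injection h with h1 h2
        subst h1; subst h2
        simp only [Matrix.diag_apply, Matrix.one_apply_eq, mul_one, smul_eq_mul]
        push_cast
        rw [hreρ (a, b)]
      · rw [if_neg h, if_neg h]
        have h11 : (1 : Matrix (ZMod d) (ZMod d) ℂ) a a' * (1 : Matrix (ZMod d) (ZMod d) ℂ) b b' = 0 := by
          by_cases h1 : a = a'
          · by_cases h2 : b = b'
            · exact absurd (Prod.ext h1 h2) h
            · rw [Matrix.one_apply_ne h2, mul_zero]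
          · rw [Matrix.one_apply_ne h1, zero_mul]
        simp only [smul_eq_mul]
        rw [show ((1 : Matrix (ZMod d) (ZMod d) ℂ) (a, b).1 (a', b').1
            * (1 : Matrix (ZMod d) (ZMod d) ℂ) (a, b).2 (a', b').2) = 0 from h11]
        ring
    rw [hA, ← Finset.smul_sum]
    have : ((c : ℝ) : ℂ) • (∑ am : ZMod d × ZMod d, spinP d am.1 1 am.2 ⊗ₖ spinP d (-am.1) 1 (-am.2))
        = (c : ℂ) • ∑ a : ZMod d, ∑ m : ZMod d, spinP d a 1 m ⊗ₖ spinP d (-a) 1 (-m) := by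
      rw [← Finset.sum_product']
      rfl
    rw [this, ← part1]
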